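/- Define M⁻(δ) as the sum of absolute values of the negative atoms of the signed measure p_δ (atoms: -1/8-δ, 1/8+δ, 3/16, 3/16, 5/16, 5/16, -δ, δ). Then M⁻(δ) ≥ 1/8 for all real δ, with equality if and only if -1/8 ≤ δ ≤ 0. -/

import Mathlib

/-- The one-parameter family of signed measures from the paper. -/
noncomputable def pδ (δ : ℝ) : Bool × Bool × Bool → ℝ
  | (true, true, true) => -1/8 - δ
  | (false, true, true) => 1/8 + δ
  | (true, false, true) => 3/16
  | (false, true, false) => 3/16
  | (true, true, false) => 5/16
  | (false, false, true) => 5/16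
  | (true, false, false) => -δ
  | (false, false, false) => δ

/-- Total negative mass of `pδ`: the sum of absolute values of negative atoms. -/
noncomputable def Mneg (δ : ℝ) : ℝ :=
  ∑ ω : Bool × Bool × Bool, if pδ δ ω < 0 then |pδ δ ω| else 0

lemma aux (x : ℝ) : (if x < 0 then |x| else 0) = max (-x) 0 := by
  rcases lt_or_ge x 0 with h | h
  · rw [if_pos h, abs_of_neg h, max_eq_left (by linarith)]
  · rw [if_neg (not_lt.2 h), max_eq_right (by linarith)]

lemma key (δ : ℝ) : Mneg δ = |1/8 + δ| + |δ| := by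
  have e : Mneg δ = max (-(-1/8 - δ)) 0 + max (-(1/8 + δ)) 0 + max (-(3/16:ℝ)) 0
      + max (-(3/16:ℝ)) 0 + max (-(5/16:ℝ)) 0 + max (-(5/16:ℝ)) 0
      + max (-(-δ)) 0 + max (-δ) 0 := by
    simp only [Mneg, Fintype.sum_prod_type, Fintype.sum_bool, aux]
    simp only [pδ]
    ring
  rw [e]
  have h1 : max (-(-1/8 - δ)) 0 = max (1/8 + δ) 0 := by ring_nf
  have h2 : max (-(-δ)) 0 = max δ 0 := by ring_nf
  rw [h1, h2]
  have hA := max_zero_add_max_neg_zero_eq_abs_self (1/8 + δ)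
  have hB := max_zero_add_max_neg_zero_eq_abs_self δ
  have c1 : ((-3:ℝ)/16) ⊔ 0 = 0 := max_eq_right (by norm_num)
  have c2 : ((-5:ℝ)/16) ⊔ 0 = 0 := max_eq_right (by norm_num)
  ring_nf at hA hB c1 c2 ⊢
  linarith

/-- M⁻(δ) ≥ 1/8 for all δ, with equality iff -1/8 ≤ δ ≤ 0. -/
theorem stmt_11 (δ : ℝ) :
    1/8 ≤ Mneg δ ∧ (Mneg δ = 1/8 ↔ -1/8 ≤ δ ∧ δ ≤ 0) := by
  rw [key]
  constructor
  · calc (1/8:ℝ) = |1/8 + δ + -δ| := by norm_num [abs_of_nonneg]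
    _ ≤ |1/8 + δ| + |-δ| := abs_add_le _ _
    _ = |1/8 + δ| + |δ| := by rw [abs_neg]
  · constructor
    · intro h
      rcases abs_cases (1/8 + δ) with ⟨h1, h2⟩ | ⟨h1, h2⟩ <;>
      rcases abs_cases δ with ⟨h3, h4⟩ | ⟨h3, h4⟩ <;>
      constructor <;> linarith
    · rintro ⟨h1, h2⟩
      rw [abs_of_nonneg (by linarith), abs_of_nonpos h2]
      ring
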